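/- Let Φ be a real M×N matrix, y ∈ ℝ^M, λ > 0 and τ > 0. Let C : ℝ → ℝ be differentiable and T : ℝ → ℝ be differentiable with T′(x) ≥ 0 for all x ∈ ℝ, and suppose the cost–activation relation λ·C′(T(x)) = x − T(x) holds for all x ∈ ℝ. Suppose u : ℝ → ℝ^N is differentiable and satisfies the LCA dynamics τ·u′(t) = Φᵀy − u(t) − (ΦᵀΦ − I)·T(u(t)), where T is applied componentwise. Then for every t the map t ↦ E(T(u(t))) has derivative equal to −τ·Σ_{n=1}^{N} T′(u_n(t))·(u_n′(t))², which is ≤ 0; in particular the LCA trajectory never increases the energy E. -/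

import Mathlib

open Matrix

/-- For the LCA dynamics with a separable cost `C` and activation `T`
satisfying the cost–activation relation, the energy
`E(a) = (1/2)‖y − Φa‖² + λ ∑ C(aₙ)` evaluated along the output trajectory
`a(t) = T(u(t))` has derivative `−τ ∑ T′(uₙ(t)) (uₙ′(t))² ≤ 0`; in particular the
energy never increases along the trajectory. -/
theorem lca_energy_decreasing_separable {M N : ℕ}
    (Φ : Matrix (Fin M) (Fin N) ℝ) (y : Fin M → ℝ)
    (lam τ : ℝ) (hlam : 0 < lam) (hτ : 0 < τ)
    (C T : ℝ → ℝ) (hC : Differentiable ℝ C) (hT : Differentiable ℝ T)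
    (hT' : ∀ x : ℝ, 0 ≤ deriv T x)
    (hrel : ∀ x : ℝ, lam * deriv C (T x) = x - T x)
    (u : ℝ → Fin N → ℝ) (hu : Differentiable ℝ u)
    (hdyn : ∀ t : ℝ, τ • deriv u t =
      Φ.transpose *ᵥ y - u t - (Φ.transpose * Φ - 1) *ᵥ (fun n => T (u t n)))
    (E : (Fin N → ℝ) → ℝ)
    (hE : ∀ a : Fin N → ℝ,
      E a = (1/2) * ∑ m, (y m - (Φ *ᵥ a) m)^2 + lam * ∑ n, C (a n)) :
    (∀ t : ℝ,
      HasDerivAt (fun s => E (fun n => T (u s n)))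
        (-τ * ∑ n, deriv T (u t n) * (deriv u t n)^2) t ∧
      -τ * ∑ n, deriv T (u t n) * (deriv u t n)^2 ≤ 0) ∧
    Antitone (fun t => E (fun n => T (u t n))) := by
  have key : ∀ t : ℝ, HasDerivAt (fun s => E (fun n => T (u s n)))
      (-τ * ∑ n, deriv T (u t n) * (deriv u t n)^2) t := by
    intro t
    have hun : ∀ n, HasDerivAt (fun s => u s n) (deriv u t n) t :=
      hasDerivAt_pi.mp (hu t).hasDerivAt
    have hTn : ∀ n, HasDerivAt (fun s => T (u s n))
        (deriv T (u t n) * deriv u t n) t :=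
      fun n => (hT (u t n)).hasDerivAt.comp t (hun n)
    set a' : Fin N → ℝ := fun n => deriv T (u t n) * deriv u t n with ha'
    have hsum : ∀ m, HasDerivAt (fun s => y m - ∑ n, Φ m n * T (u s n))
        (- ∑ n, Φ m n * a' n) t := by
      intro m
      have h1 : HasDerivAt (fun s => ∑ n, Φ m n * T (u s n)) (∑ n, Φ m n * a' n) t :=
        HasDerivAt.fun_sum (fun n _ => (hTn n).const_mul (Φ m n))
      simpa using (hasDerivAt_const t (y m)).fun_sub h1
    have hsq : HasDerivAt (fun s => (1/2 : ℝ) * ∑ m, (y m - ∑ n, Φ m n * T (u s n))^2)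
        ((1/2) * ∑ m, ((2:ℝ) * (y m - ∑ n, Φ m n * T (u t n)) * (- ∑ n, Φ m n * a' n))) t := by
      refine HasDerivAt.const_mul _ (HasDerivAt.fun_sum fun m _ => ?_)
      simpa using (hsum m).fun_pow 2
    have hcost : HasDerivAt (fun s => lam * ∑ n, C (T (u s n)))
        (lam * ∑ n, deriv C (T (u t n)) * a' n) t :=
      HasDerivAt.const_mul _ (HasDerivAt.fun_sum fun n _ =>
        (hC (T (u t n))).hasDerivAt.comp t (hTn n))
    have htot := hsq.fun_add hcost
    have hfun : (fun s => E (fun n => T (u s n))) =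
        (fun s => (1/2 : ℝ) * ∑ m, (y m - ∑ n, Φ m n * T (u s n))^2
          + lam * ∑ n, C (T (u s n))) := by
      funext s
      simp [hE, Matrix.mulVec, dotProduct]
    rw [hfun]
    refine htot.congr_deriv (Eq.symm ?_)
    -- algebra: show target derivative equals computed one
    have hdyn' : ∀ n, ∑ m, Φ m n * (y m - ∑ k, Φ m k * T (u t k)) =
        τ * deriv u t n + (u t n - T (u t n)) := by
      intro n
      have h := congrFun (hdyn t) n
      simp only [Pi.smul_apply, smul_eq_mul, Matrix.sub_mulVec, Matrix.one_mulVec,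
        Pi.sub_apply, ← Matrix.mulVec_mulVec, Matrix.mulVec, dotProduct,
        Matrix.transpose_apply] at h
      rw [h]
      simp [mul_sub, Finset.sum_sub_distrib]
      ring
    calc -τ * ∑ n, deriv T (u t n) * (deriv u t n)^2
        = ∑ n, (-(τ * deriv u t n + (u t n - T (u t n))) + (u t n - T (u t n))) * a' n := by
          rw [Finset.mul_sum]
          refine Finset.sum_congr rfl fun n _ => ?_
          simp only [ha']
          ring
      _ = ∑ n, (-(∑ m, Φ m n * (y m - ∑ k, Φ m k * T (u t k))) + lam * deriv C (T (u t n))) * a' n := by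
          refine Finset.sum_congr rfl fun n _ => ?_
          rw [hdyn' n, hrel (u t n)]
      _ = (1/2) * ∑ m, ((2:ℝ) * (y m - ∑ n, Φ m n * T (u t n)) * (- ∑ n, Φ m n * a' n))
          + lam * ∑ n, deriv C (T (u t n)) * a' n := by
          simp only [add_mul, Finset.sum_add_distrib, neg_mul, Finset.sum_mul,
            Finset.mul_sum, mul_neg, ← Finset.sum_neg_distrib]
          rw [Finset.sum_comm]
          congr 1
          · refine Finset.sum_congr rfl fun m _ => Finset.sum_congr rfl fun n _ => ?_
            ring
          · refine Finset.sum_congr rfl fun n _ => ?_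
            ring
  have hnonpos : ∀ t : ℝ, -τ * ∑ n, deriv T (u t n) * (deriv u t n)^2 ≤ 0 := by
    intro t
    have : 0 ≤ ∑ n, deriv T (u t n) * (deriv u t n)^2 :=
      Finset.sum_nonneg fun n _ => mul_nonneg (hT' _) (sq_nonneg _)
    nlinarith
  refine ⟨fun t => ⟨key t, hnonpos t⟩, ?_⟩
  have hdiff : Differentiable ℝ (fun s => E (fun n => T (u s n))) :=
    fun t => (key t).differentiableAt
  refine antitone_of_deriv_nonpos hdiff fun t => ?_
  rw [(key t).deriv]
  exact hnonpos t
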